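/- Let G be a group generated by a set S with a presentation whose relations are all of the form w s w^{-1} = t for s, t ∈ S and words w. Then the natural surjection Φ : Env(D(S^G)) → G is an isomorphism of groups. -/

import Mathlib

/-- The set of all conjugates of elements of `S` in `G`. -/
def conjSet (G : Type*) [Group G] (S : Set G) : Set G :=
  {x | ∃ s ∈ S, ∃ g : G, x = g * s * g⁻¹}

theorem conjSet.conj_mem {G : Type*} [Group G] {S : Set G} {x : G}
    (hx : x ∈ conjSet G S) (g : G) : g * x * g⁻¹ ∈ conjSet G S := by
  obtain ⟨s, hs, h, rfl⟩ := hx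
  exact ⟨s, hs, g * h, by group⟩

/-- The Dehn quandle operation `x * y = y x y⁻¹` on the set of conjugates of `S`. -/
def dehnOp {G : Type*} [Group G] {S : Set G} (x y : conjSet G S) : conjSet G S :=
  ⟨(y : G) * (x : G) * (y : G)⁻¹, conjSet.conj_mem x.2 (y : G)⟩

/-- Relations defining the enveloping group of the Dehn quandle `D(S^G)`:
`e_{x*y} = e_y e_x e_y⁻¹`. -/
def dehnEnvRels (G : Type*) [Group G] (S : Set G) : Set (FreeGroup (conjSet G S)) :=
  {r | ∃ x y : conjSet G S,
    r = FreeGroup.of (dehnOp x y) *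
      (FreeGroup.of y * FreeGroup.of x * (FreeGroup.of y)⁻¹)⁻¹}

/-- The enveloping group of the Dehn quandle `D(S^G)`. -/
abbrev DehnEnv (G : Type*) [Group G] (S : Set G) : Type _ :=
  PresentedGroup (dehnEnvRels G S)

section Aux

variable {G : Type*} [Group G] {S : Set G}

lemma DehnEnv.of_congr {a b : G} (h : a = b) (ha : a ∈ conjSet G S) (hb : b ∈ conjSet G S) :
    (PresentedGroup.of ⟨a, ha⟩ : DehnEnv G S) = PresentedGroup.of ⟨b, hb⟩ := by
  subst h; rfl

/-- The defining relation of the enveloping group. -/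
lemma DehnEnv.rel (x y : conjSet G S) :
    (PresentedGroup.of (dehnOp x y) : DehnEnv G S)
      = PresentedGroup.of y * PresentedGroup.of x * (PresentedGroup.of y)⁻¹ := by
  have h : (PresentedGroup.mk (dehnEnvRels G S))
      (FreeGroup.of (dehnOp x y) *
        (FreeGroup.of y * FreeGroup.of x * (FreeGroup.of y)⁻¹)⁻¹) = 1 := by
    apply (QuotientGroup.eq_one_iff _).2
    exact Subgroup.subset_normalClosure ⟨x, y, rfl⟩
  rw [map_mul, map_inv, map_mul, map_mul, map_inv] at h
  have := mul_eq_one_iff_eq_inv.1 h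
  simpa [PresentedGroup.of] using this

end Aux

section Main

variable (α : Type*) (rels : Set (FreeGroup α))

local notation "GG" => PresentedGroup rels
local notation "SS" => Set.range (PresentedGroup.of : α → PresentedGroup rels)

/-- generators of `G` are in the conjugation set. -/
lemma of_mem_S (a : α) : (PresentedGroup.of a : GG) ∈ conjSet GG SS :=
  ⟨PresentedGroup.of a, Set.mem_range_self a, 1, by group⟩

/-- The candidate inverse on free group level. -/
def psi0 : FreeGroup α →* DehnEnv GG SS :=
  FreeGroup.lift (fun a => PresentedGroup.of ⟨PresentedGroup.of a, of_mem_S α rels a⟩)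

lemma psi0_of (a : α) :
    psi0 α rels (FreeGroup.of a)
      = PresentedGroup.of ⟨PresentedGroup.of a, of_mem_S α rels a⟩ :=
  FreeGroup.lift_apply_of

lemma psi0_key (w : FreeGroup α) :
    ∀ (x : GG) (hx : x ∈ conjSet GG SS),
      (PresentedGroup.of ⟨PresentedGroup.mk rels w * x * (PresentedGroup.mk rels w)⁻¹,
          conjSet.conj_mem hx _⟩ : DehnEnv GG SS)
        = psi0 α rels w * PresentedGroup.of ⟨x, hx⟩ * (psi0 α rels w)⁻¹ := by
  induction w using FreeGroup.induction_on with
  | C1 =>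
    intro x hx
    rw [map_one, map_one]
    refine (DehnEnv.of_congr (by group) _ hx).trans ?_
    group
  | of a =>
    have hpa : (pure a : FreeGroup α) = FreeGroup.of a := rfl
    intro x hx
    have hrel := DehnEnv.rel (⟨x, hx⟩ : conjSet GG SS)
      ⟨PresentedGroup.of a, of_mem_S α rels a⟩
    refine (DehnEnv.of_congr rfl _
      (dehnOp (⟨x, hx⟩ : conjSet GG SS) ⟨_, of_mem_S α rels a⟩).2).trans ?_
    rw [hrel, psi0_of]
  | inv_of a ih =>
    have hpa : (pure a : FreeGroup α) = FreeGroup.of a := rfl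
    intro x hx
    have hx' : (PresentedGroup.mk rels (FreeGroup.of a))⁻¹ * x *
        ((PresentedGroup.mk rels (FreeGroup.of a))⁻¹)⁻¹ ∈ conjSet GG SS :=
      conjSet.conj_mem hx _
    have h2 := ih _ hx'
    have h3 : (PresentedGroup.of
        ⟨PresentedGroup.mk rels (FreeGroup.of a) *
          ((PresentedGroup.mk rels (FreeGroup.of a))⁻¹ * x *
            ((PresentedGroup.mk rels (FreeGroup.of a))⁻¹)⁻¹) *
          (PresentedGroup.mk rels (FreeGroup.of a))⁻¹,
          conjSet.conj_mem hx' _⟩ : DehnEnv GG SS)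
        = PresentedGroup.of ⟨x, hx⟩ := DehnEnv.of_congr (by group) _ hx
    rw [h3] at h2
    rw [map_inv, map_inv]
    refine (DehnEnv.of_congr (by group) _ hx').trans ?_
    rw [h2]; group
  | mul u v ihu ihv =>
    intro x hx
    have hxv : PresentedGroup.mk rels v * x * (PresentedGroup.mk rels v)⁻¹ ∈ conjSet GG SS :=
      conjSet.conj_mem hx _
    have h1 := ihv x hx
    have h2 := ihu _ hxv
    rw [map_mul, map_mul]
    refine (DehnEnv.of_congr (by group) _
      (conjSet.conj_mem hxv (PresentedGroup.mk rels u))).trans ?_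
    rw [h2, h1]; group

end Main

/-- If `G` has a presentation all of whose relations have the form `w s w⁻¹ = t` with
`s, t` generators, then the natural surjection `Φ : Env(D(S^G)) → G` is an isomorphism. -/
theorem envelGroup_iso_of_conjugation_relations (α : Type*) (rels : Set (FreeGroup α))
    (hrels : ∀ r ∈ rels, ∃ (w : FreeGroup α) (s t : α),
      r = w * FreeGroup.of s * w⁻¹ * (FreeGroup.of t)⁻¹) :
    ∃ Φ : DehnEnv (PresentedGroup rels)
        (Set.range (PresentedGroup.of : α → PresentedGroup rels)) →* PresentedGroup rels,
      (∀ x : conjSet (PresentedGroup rels)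
          (Set.range (PresentedGroup.of : α → PresentedGroup rels)),
        Φ (PresentedGroup.of x) = (x : PresentedGroup rels)) ∧
      Function.Bijective Φ := by
  set G := PresentedGroup rels
  set S := Set.range (PresentedGroup.of : α → PresentedGroup rels) with hS
  -- Φ
  have hΦrels : ∀ r ∈ dehnEnvRels G S,
      FreeGroup.lift (fun x : conjSet G S => (x : G)) r = 1 := by
    rintro r ⟨x, y, rfl⟩
    simp only [map_mul, map_inv, FreeGroup.lift_apply_of, dehnOp]
    group
  refine ⟨PresentedGroup.toGroup hΦrels, fun x => PresentedGroup.toGroup.of hΦrels, ?_⟩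
  set Φ := PresentedGroup.toGroup hΦrels
  -- Ψ
  have hΨrels : ∀ r ∈ rels, FreeGroup.lift
      (fun a : α => (PresentedGroup.of ⟨PresentedGroup.of a, of_mem_S α rels a⟩ : DehnEnv G S))
      r = 1 := by
    intro r hr
    obtain ⟨w, s, t, rfl⟩ := hrels r hr
    have hkey := psi0_key α rels w (PresentedGroup.of s) (of_mem_S α rels s)
    have hst : PresentedGroup.mk rels w * PresentedGroup.of s * (PresentedGroup.mk rels w)⁻¹
        = (PresentedGroup.of t : G) := by
      have h1 : (PresentedGroup.mk rels) (w * FreeGroup.of s * w⁻¹ * (FreeGroup.of t)⁻¹) = 1 :=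
        (QuotientGroup.eq_one_iff _).2 (Subgroup.subset_normalClosure hr)
      rw [map_mul, map_inv, map_mul, map_inv] at h1
      have := mul_eq_one_iff_eq_inv.1 h1
      simpa [PresentedGroup.of] using this
    have h2 : (PresentedGroup.of
        ⟨PresentedGroup.mk rels w * PresentedGroup.of s * (PresentedGroup.mk rels w)⁻¹,
          conjSet.conj_mem (of_mem_S α rels s) _⟩ : DehnEnv G S)
        = PresentedGroup.of ⟨PresentedGroup.of t, of_mem_S α rels t⟩ :=
      DehnEnv.of_congr hst _ _
    rw [h2] at hkey
    show psi0 α rels (w * FreeGroup.of s * w⁻¹ * (FreeGroup.of t)⁻¹) = 1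
    rw [map_mul, map_mul, map_mul, map_inv, map_inv, psi0_of, psi0_of, mul_inv_eq_one]
    exact hkey.symm
  set Ψ : G →* DehnEnv G S := PresentedGroup.toGroup hΨrels with hΨ
  -- Ψ ∘ mk = psi0
  have hΨmk : ∀ u : FreeGroup α, Ψ (PresentedGroup.mk rels u) = psi0 α rels u := by
    intro u
    induction u using FreeGroup.induction_on with
    | C1 => simp
    | of a =>
      show Ψ (PresentedGroup.of a) = psi0 α rels (FreeGroup.of a)
      rw [psi0_of]
      exact PresentedGroup.toGroup.of hΨrels
    | inv_of a ih => rw [map_inv, map_inv, map_inv, ih]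
    | mul u v ihu ihv => rw [map_mul, map_mul, map_mul, ihu, ihv]
  -- Ψ (x) = e_x for x ∈ conjSet
  have hΨx : ∀ x : conjSet G S, Ψ (x : G) = PresentedGroup.of x := by
    rintro ⟨x, hx⟩
    obtain ⟨s, ⟨a, rfl⟩, g, rfl⟩ := hx
    obtain ⟨w, rfl⟩ := PresentedGroup.mk_surjective rels g
    have hkey := psi0_key α rels w (PresentedGroup.of a) (of_mem_S α rels a)
    have ha : Ψ (PresentedGroup.of a) =
        PresentedGroup.of ⟨PresentedGroup.of a, of_mem_S α rels a⟩ :=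
      PresentedGroup.toGroup.of hΨrels
    rw [map_mul, map_mul, map_inv, hΨmk, ha]
    refine hkey.symm.trans (DehnEnv.of_congr rfl _ _)
  -- bijectivity
  have hΦΨ : ∀ g : G, Φ (Ψ g) = g := by
    intro g
    induction g using PresentedGroup.induction_on with
    | H z =>
      rw [hΨmk]
      induction z using FreeGroup.induction_on with
      | C1 => simp
      | of a =>
        show Φ (psi0 α rels (FreeGroup.of a)) = PresentedGroup.of a
        rw [psi0_of]
        exact PresentedGroup.toGroup.of hΦrels
      | inv_of a ih => rw [map_inv, map_inv, map_inv, ih]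
      | mul u v ihu ihv => rw [map_mul, map_mul, map_mul, ihu, ihv]
  have hΨΦ : ∀ e : DehnEnv G S, Ψ (Φ e) = e := by
    intro e
    induction e using PresentedGroup.induction_on with
    | H z =>
      induction z using FreeGroup.induction_on with
      | C1 => simp
      | of x =>
        show Ψ (Φ (PresentedGroup.of x)) = PresentedGroup.of x
        rw [PresentedGroup.toGroup.of hΦrels, hΨx]
      | inv_of x ih => rw [map_inv, map_inv, map_inv, ih]
      | mul u v ihu ihv => rw [map_mul, map_mul, map_mul, ihu, ihv]
  exact Function.bijective_iff_has_inverse.2 ⟨Ψ, hΨΦ, hΦΨ⟩
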